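/- Let u₁, …, u_m be independent, identically distributed real random variables with mean zero whose values lie almost surely in an interval of length L > 0, and let S_k = Σ_{i=1}^{k} u_i for k ∈ {1,…,m}. Then for all λ₁, λ₂ > 0 with 2·exp(−2λ₂²/(m·L²)) < 1, P( max_{k ∈ {1,…,m}} |S_k| > λ₁ + λ₂ ) ≤ 2·exp(−2λ₁²/(m·L²)) / (1 − 2·exp(−2λ₂²/(m·L²))). -/

import Mathlib

open Real MeasureTheory ProbabilityTheory


lemma hoeff_quad {p : ℝ} (hp0 : 0 ≤ p) (hp1 : p ≤ 1) (h : ℝ) :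
    -(h * p) + Real.log (1 - p + p * Real.exp h) ≤ h ^ 2 / 8 := by
  set d : ℝ → ℝ := fun x => 1 - p + p * Real.exp x with hd_def
  have hd_pos : ∀ x, 0 < d x := by
    intro x
    rcases hp1.lt_or_eq with hp | hp
    · have : 0 ≤ p * Real.exp x := mul_nonneg hp0 (exp_pos x).le
      simp only [hd_def]; linarith
    · simp only [hd_def, hp]
      have := exp_pos x; linarith
  have hd' : ∀ x, HasDerivAt d (p * Real.exp x) x := fun x =>
    ((Real.hasDerivAt_exp x).const_mul p).const_add (1 - p)
  set f2 : ℝ → ℝ := fun x => -p + p * Real.exp x / d x - x / 4 with hf2_def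
  have hf2' : ∀ x, HasDerivAt f2
      ((p * Real.exp x * d x - p * Real.exp x * (p * Real.exp x)) / d x ^ 2 - 1 / 4) x := by
    intro x
    have h1 : HasDerivAt (fun x => p * Real.exp x) (p * Real.exp x) x :=
      (Real.hasDerivAt_exp x).const_mul p
    have h2 := (h1.div (hd' x) (hd_pos x).ne').const_add (-p)
    have h3 : HasDerivAt (fun x : ℝ => x / 4) (1 / 4) x := (hasDerivAt_id x).div_const 4
    exact h2.sub h3
  have hf2'_nonpos : ∀ x,
      (p * Real.exp x * d x - p * Real.exp x * (p * Real.exp x)) / d x ^ 2 - 1 / 4 ≤ 0 := by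
    intro x
    have hA : (0:ℝ) ≤ 1 - p := by linarith
    have hB : (0:ℝ) ≤ p * Real.exp x := mul_nonneg hp0 (exp_pos x).le
    have hd2 : (0:ℝ) < d x ^ 2 := pow_pos (hd_pos x) 2
    rw [sub_nonpos, div_le_iff₀ hd2]
    simp only [hd_def]
    nlinarith [sq_nonneg ((1 - p) - p * Real.exp x)]
  have hf2_anti : Antitone f2 := by
    refine antitone_of_deriv_nonpos (fun x => (hf2' x).differentiableAt) (fun x => ?_)
    rw [(hf2' x).deriv]; exact hf2'_nonpos x
  have hf2_zero : f2 0 = 0 := by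
    simp only [hf2_def, hd_def]
    norm_num
  -- f1
  set f1 : ℝ → ℝ := fun x => -(x * p) + Real.log (d x) - x ^ 2 / 8 with hf1_def
  have hf1' : ∀ x, HasDerivAt f1 (f2 x) x := by
    intro x
    have h1 : HasDerivAt (fun x : ℝ => -(x * p)) (-p) x := by
      exact (hasDerivAt_mul_const p).neg
    have h2 : HasDerivAt (fun x => Real.log (d x)) (p * Real.exp x / d x) x :=
      (hd' x).log (hd_pos x).ne'
    have h3 : HasDerivAt (fun x : ℝ => x ^ 2 / 8) (2 * x ^ 1 / 8) x :=
      (hasDerivAt_pow 2 x).div_const 8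
    have := (h1.add h2).sub h3
    convert this using 1
    · rfl
    · rfl
    · rfl
    · simp only [hf2_def]; ring
  have hf1_zero : f1 0 = 0 := by
    simp only [hf1_def, hd_def]
    norm_num
  have key : f1 h ≤ 0 := by
    rcases le_or_gt 0 h with hh | hh
    · have := antitoneOn_of_deriv_nonpos (convex_Ici (0:ℝ))
        (fun x _ => (hf1' x).continuousAt.continuousWithinAt)
        (fun x _ => (hf1' x).differentiableAt.differentiableWithinAt)
        (fun x hx => by
          rw [(hf1' x).deriv]
          have : (0:ℝ) ≤ x := le_of_lt (by simpa using hx)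
          calc f2 x ≤ f2 0 := hf2_anti this
            _ = 0 := hf2_zero)
      have := this (Set.self_mem_Ici) (Set.mem_Ici.mpr hh) hh
      rwa [hf1_zero] at this
    · have := monotoneOn_of_deriv_nonneg (convex_Iic (0:ℝ))
        (fun x _ => (hf1' x).continuousAt.continuousWithinAt)
        (fun x _ => (hf1' x).differentiableAt.differentiableWithinAt)
        (fun x hx => by
          rw [(hf1' x).deriv]
          have hx0 : x ≤ (0:ℝ) := le_of_lt (by simpa using hx)
          calc (0:ℝ) = f2 0 := hf2_zero.symm
            _ ≤ f2 x := hf2_anti hx0)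
      have := this (Set.mem_Iic.mpr hh.le) (Set.self_mem_Iic) hh.le
      rwa [hf1_zero] at this
  have : f1 h = -(h * p) + Real.log (1 - p + p * Real.exp h) - h ^ 2 / 8 := rfl
  linarith [key, this ▸ key]

lemma hoeff_int {Θ : Type*} [MeasurableSpace Θ] (Pr : Measure Θ) [IsProbabilityMeasure Pr]
    {X : Θ → ℝ} (hX : Measurable X) {a b : ℝ}
    (hb : ∀ᵐ θ ∂Pr, X θ ∈ Set.Icc a b) (t : ℝ) :
    Integrable (fun θ => Real.exp (t * X θ)) Pr := by
  refine (integrable_const (Real.exp (|t| * (|a| + |b|)))).mono'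
    ((hX.const_mul t).exp.aestronglyMeasurable) ?_
  filter_upwards [hb] with θ hθ
  rw [Real.norm_eq_abs, abs_of_pos (exp_pos _)]
  apply Real.exp_le_exp.mpr
  have h1 : |X θ| ≤ max |a| |b| := abs_le_max_abs_abs hθ.1 hθ.2
  calc t * X θ ≤ |t * X θ| := le_abs_self _
    _ = |t| * |X θ| := abs_mul _ _
    _ ≤ |t| * (|a| + |b|) := by
        refine mul_le_mul_of_nonneg_left (h1.trans ?_) (abs_nonneg t)
        exact max_le (le_add_of_nonneg_right (abs_nonneg _)) (le_add_of_nonneg_left (abs_nonneg _))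

/-- Hoeffding's lemma -/
lemma hoeff_mgf {Θ : Type*} [MeasurableSpace Θ] (Pr : Measure Θ) [IsProbabilityMeasure Pr]
    {X : Θ → ℝ} (hX : Measurable X) {a L : ℝ} (hL : 0 < L)
    (hb : ∀ᵐ θ ∂Pr, X θ ∈ Set.Icc a (a + L)) (h0 : (∫ θ, X θ ∂Pr) = 0) (t : ℝ) :
    mgf X Pr t ≤ Real.exp (t ^ 2 * L ^ 2 / 8) := by
  have hXint : Integrable X Pr := by
    refine (integrable_const (max |a| |a + L|)).mono' hX.aestronglyMeasurable ?_
    filter_upwards [hb] with θ hθ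
    rw [Real.norm_eq_abs]
    exact abs_le_max_abs_abs hθ.1 hθ.2
  have ha0 : a ≤ 0 := by
    have h1 : (∫ _ : Θ, a ∂Pr) ≤ ∫ θ, X θ ∂Pr := by
      refine integral_mono_ae (integrable_const a) hXint ?_
      filter_upwards [hb] with θ hθ using hθ.1
    rwa [integral_const, probReal_univ, one_smul, h0] at h1
  have hb0 : 0 ≤ a + L := by
    have h1 : (∫ θ, X θ ∂Pr) ≤ ∫ _ : Θ, (a + L) ∂Pr := by
      refine integral_mono_ae hXint (integrable_const (a + L)) ?_
      filter_upwards [hb] with θ hθ using hθ.2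
    rwa [integral_const, probReal_univ, one_smul, h0] at h1
  set b := a + L with hb_def
  set p := -a / L with hp_def
  have hp0 : 0 ≤ p := by
    apply div_nonneg (by linarith) hL.le
  have hp1 : p ≤ 1 := by
    rw [hp_def, div_le_one hL]; linarith
  set C : ℝ := (b - 0) / L * Real.exp (t * a) + (0 - a) / L * Real.exp (t * b) with hC_def
  -- pointwise bound
  have hpt : ∀ᵐ θ ∂Pr, Real.exp (t * X θ) ≤
      (b - X θ) / L * Real.exp (t * a) + (X θ - a) / L * Real.exp (t * b) := by
    filter_upwards [hb] with θ hθ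
    have hxa : a ≤ X θ := hθ.1
    have hxb : X θ ≤ b := hθ.2
    have hw1 : 0 ≤ (b - X θ) / L := div_nonneg (by linarith) hL.le
    have hw2 : 0 ≤ (X θ - a) / L := div_nonneg (by linarith) hL.le
    have hsum : (b - X θ) / L + (X θ - a) / L = 1 := by
      field_simp; rw [hb_def]; ring
    have := convexOn_exp.2 (Set.mem_univ (t * a)) (Set.mem_univ (t * b)) hw1 hw2 hsum
    simp only [smul_eq_mul] at this
    have harg : (b - X θ) / L * (t * a) + (X θ - a) / L * (t * b) = t * X θ := by
      field_simp; rw [hb_def]; ring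
    rw [harg] at this
    exact this
  have hint1 : Integrable (fun θ => Real.exp (t * X θ)) Pr := hoeff_int Pr hX hb t
  have hint2 : Integrable
      (fun θ => (b - X θ) / L * Real.exp (t * a) + (X θ - a) / L * Real.exp (t * b)) Pr := by
    apply Integrable.add
    · exact (((integrable_const b).sub hXint).div_const L).mul_const _
    · exact ((hXint.sub (integrable_const a)).div_const L).mul_const _
  have hI1 : Integrable (fun θ => (b - X θ) / L * Real.exp (t * a)) Pr :=
    (((integrable_const b).sub hXint).div_const L).mul_const _
  have hI2 : Integrable (fun θ => (X θ - a) / L * Real.exp (t * b)) Pr :=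
    ((hXint.sub (integrable_const a)).div_const L).mul_const _
  have hle : mgf X Pr t ≤ C := by
    rw [mgf]
    calc (∫ θ, Real.exp (t * X θ) ∂Pr)
        ≤ ∫ θ, ((b - X θ) / L * Real.exp (t * a) + (X θ - a) / L * Real.exp (t * b)) ∂Pr :=
          integral_mono_ae hint1 hint2 hpt
      _ = C := by
          rw [integral_add hI1 hI2]
          simp only [div_mul_eq_mul_div, integral_div, integral_mul_const]
          rw [integral_sub (integrable_const b) hXint, integral_sub hXint (integrable_const a)]
          simp only [integral_const, probReal_univ, one_smul, h0, hC_def]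
          ring
  refine hle.trans ?_
  -- C = exp(t*a) * ((1-p) + p * exp (t*L)) ≤ exp(t²L²/8)
  have hd_pos : 0 < 1 - p + p * Real.exp (t * L) := by
    rcases hp1.lt_or_eq with hp | hp
    · have : 0 ≤ p * Real.exp (t * L) := mul_nonneg hp0 (exp_pos _).le
      linarith
    · rw [hp]; have := exp_pos (t * L); linarith
  have hCeq : C = Real.exp (t * a) * (1 - p + p * Real.exp (t * L)) := by
    rw [hC_def, hb_def, hp_def]
    have hE : Real.exp (t * (a + L)) = Real.exp (t * a) * Real.exp (t * L) := by
      rw [← Real.exp_add]; ring_nf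
    rw [hE]; field_simp; ring
  have haeq : t * a = -(t * L * p) := by
    rw [hp_def]; field_simp
  rw [hCeq, ← Real.exp_log hd_pos, ← Real.exp_add, haeq]
  apply Real.exp_le_exp.mpr
  have := hoeff_quad hp0 hp1 (t * L)
  calc -(t * L * p) + Real.log (1 - p + p * Real.exp (t * L)) ≤ (t * L) ^ 2 / 8 := this
    _ = t ^ 2 * L ^ 2 / 8 := by ring

lemma hoeff_sum {Θ ι : Type*} [MeasurableSpace Θ] {Pr : Measure Θ} [IsProbabilityMeasure Pr]
    {X : ι → Θ → ℝ}
    (hInd : iIndepFun X Pr)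
    (hmeas : ∀ i, Measurable (X i))
    {L : ℝ} (hL : 0 < L) (s : Finset ι) (hs : s.Nonempty)
    (hmgf : ∀ i ∈ s, ∀ t, mgf (X i) Pr t ≤ Real.exp (t ^ 2 * L ^ 2 / 8))
    (hint : ∀ i ∈ s, ∀ t, Integrable (fun θ => Real.exp (t * X i θ)) Pr)
    {lam : ℝ} (hlam : 0 < lam) :
    (Pr {θ | lam ≤ ∑ i ∈ s, X i θ}).toReal
      ≤ Real.exp (-2 * lam ^ 2 / (s.card * L ^ 2)) := by
  set n : ℝ := (s.card : ℝ) with hn_def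
  have hn1 : 1 ≤ n := by
    rw [hn_def]
    exact_mod_cast Nat.one_le_iff_ne_zero.mpr (Finset.card_ne_zero_of_mem hs.choose_spec)
  have hn0 : 0 < n := lt_of_lt_of_le one_pos hn1
  set t : ℝ := 4 * lam / (n * L ^ 2) with ht_def
  have ht0 : 0 < t := by
    apply div_pos (by linarith) (by positivity)
  have hintsum : Integrable (fun θ => Real.exp (t * (∑ i ∈ s, X i) θ)) Pr :=
    hInd.integrable_exp_mul_sum hmeas (fun i hi => hint i hi t)
  have hcher := measure_ge_le_exp_mul_mgf (μ := Pr) (X := ∑ i ∈ s, X i) lam ht0.le hintsum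
  have hset : {θ | lam ≤ (∑ i ∈ s, X i) θ} = {θ | lam ≤ ∑ i ∈ s, X i θ} := by
    ext θ; simp [Finset.sum_apply]
  rw [hset] at hcher
  have hmgfsum : mgf (∑ i ∈ s, X i) Pr t ≤ Real.exp (n * (t ^ 2 * L ^ 2 / 8)) := by
    rw [hInd.mgf_sum hmeas]
    calc (∏ i ∈ s, mgf (X i) Pr t) ≤ ∏ i ∈ s, Real.exp (t ^ 2 * L ^ 2 / 8) :=
          Finset.prod_le_prod (fun i _ => mgf_nonneg) (fun i hi => hmgf i hi t)
      _ = Real.exp (t ^ 2 * L ^ 2 / 8) ^ s.card := Finset.prod_const _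
      _ = Real.exp (n * (t ^ 2 * L ^ 2 / 8)) := by
          rw [hn_def, ← Real.exp_nat_mul]
  refine hcher.trans ?_
  calc Real.exp (-t * lam) * mgf (∑ i ∈ s, X i) Pr t
      ≤ Real.exp (-t * lam) * Real.exp (n * (t ^ 2 * L ^ 2 / 8)) := by
        exact mul_le_mul_of_nonneg_left hmgfsum (exp_pos _).le
    _ = Real.exp (-t * lam + n * (t ^ 2 * L ^ 2 / 8)) := (Real.exp_add _ _).symm
    _ = Real.exp (-2 * lam ^ 2 / (n * L ^ 2)) := by
        congr 1
        rw [ht_def]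
        field_simp
        ring

lemma hoeff_abs {Θ ι : Type*} [MeasurableSpace Θ] {Pr : Measure Θ} [IsProbabilityMeasure Pr]
    {X : ι → Θ → ℝ}
    (hInd : iIndepFun X Pr)
    (hmeas : ∀ i, Measurable (X i))
    {L : ℝ} (hL : 0 < L) {a : ℝ} (s : Finset ι) (hs : s.Nonempty)
    (hb : ∀ i ∈ s, ∀ᵐ θ ∂Pr, X i θ ∈ Set.Icc a (a + L))
    (h0 : ∀ i ∈ s, (∫ θ, X i θ ∂Pr) = 0)
    {lam : ℝ} (hlam : 0 < lam) :
    (Pr {θ | lam < |∑ i ∈ s, X i θ|}).toReal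
      ≤ 2 * Real.exp (-2 * lam ^ 2 / (s.card * L ^ 2)) := by
  have hmgf1 : ∀ i ∈ s, ∀ t, mgf (X i) Pr t ≤ Real.exp (t ^ 2 * L ^ 2 / 8) :=
    fun i hi t => hoeff_mgf Pr (hmeas i) hL (hb i hi) (h0 i hi) t
  have hint1 : ∀ i ∈ s, ∀ t, Integrable (fun θ => Real.exp (t * X i θ)) Pr :=
    fun i hi t => hoeff_int Pr (hmeas i) (hb i hi) t
  -- negated family
  set Y : ι → Θ → ℝ := fun i => -(X i) with hY_def
  have hIndY : iIndepFun Y Pr :=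
    hInd.comp (fun _ => Neg.neg) (fun _ => measurable_neg)
  have hmeasY : ∀ i, Measurable (Y i) := fun i => (hmeas i).neg
  have hbY : ∀ i ∈ s, ∀ᵐ θ ∂Pr, Y i θ ∈ Set.Icc (-(a + L)) (-(a + L) + L) := by
    intro i hi
    filter_upwards [hb i hi] with θ hθ
    simp only [hY_def, Pi.neg_apply, Set.mem_Icc]
    constructor <;> [linarith [hθ.2]; linarith [hθ.1]]
  have h0Y : ∀ i ∈ s, (∫ θ, Y i θ ∂Pr) = 0 := by
    intro i hi
    simp only [hY_def, Pi.neg_apply, integral_neg, h0 i hi, neg_zero]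
  have hmgfY : ∀ i ∈ s, ∀ t, mgf (Y i) Pr t ≤ Real.exp (t ^ 2 * L ^ 2 / 8) :=
    fun i hi t => hoeff_mgf Pr (hmeasY i) hL (hbY i hi) (h0Y i hi) t
  have hintY : ∀ i ∈ s, ∀ t, Integrable (fun θ => Real.exp (t * Y i θ)) Pr :=
    fun i hi t => hoeff_int Pr (hmeasY i) (hbY i hi) t
  have H1 := hoeff_sum hInd hmeas hL s hs hmgf1 hint1 hlam
  have H2 := hoeff_sum hIndY hmeasY hL s hs hmgfY hintY hlam
  -- set inclusion
  have hYsum : ∀ θ, ∑ i ∈ s, Y i θ = -∑ i ∈ s, X i θ := by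
    intro θ
    simp only [hY_def, Pi.neg_apply, ← Finset.sum_neg_distrib]
  have hsub : {θ | lam < |∑ i ∈ s, X i θ|} ⊆
      {θ | lam ≤ ∑ i ∈ s, X i θ} ∪ {θ | lam ≤ ∑ i ∈ s, Y i θ} := by
    intro θ hθ
    simp only [Set.mem_setOf_eq] at hθ
    rcases lt_abs.mp hθ with h | h
    · exact Set.mem_union_left _ (Set.mem_setOf_eq ▸ h.le)
    · refine Set.mem_union_right _ ?_
      simp only [Set.mem_setOf_eq, hYsum θ]
      exact h.le
  have hmeasle := (measure_mono (μ := Pr) hsub).trans (measure_union_le _ _)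
  have hfin1 : Pr {θ | lam ≤ ∑ i ∈ s, X i θ} ≠ ⊤ := measure_ne_top _ _
  have hfin2 : Pr {θ | lam ≤ ∑ i ∈ s, Y i θ} ≠ ⊤ := measure_ne_top _ _
  calc (Pr {θ | lam < |∑ i ∈ s, X i θ|}).toReal
      ≤ (Pr {θ | lam ≤ ∑ i ∈ s, X i θ} + Pr {θ | lam ≤ ∑ i ∈ s, Y i θ}).toReal :=
        ENNReal.toReal_mono (ENNReal.add_ne_top.mpr ⟨hfin1, hfin2⟩) hmeasle
    _ = (Pr {θ | lam ≤ ∑ i ∈ s, X i θ}).toReal + (Pr {θ | lam ≤ ∑ i ∈ s, Y i θ}).toReal :=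
        ENNReal.toReal_add hfin1 hfin2
    _ ≤ Real.exp (-2 * lam ^ 2 / (s.card * L ^ 2)) + Real.exp (-2 * lam ^ 2 / (s.card * L ^ 2)) :=
        add_le_add H1 H2
    _ = 2 * Real.exp (-2 * lam ^ 2 / (s.card * L ^ 2)) := by ring

/-- Ottaviani's maximal inequality combined with Hoeffding's inequality: for i.i.d.
mean-zero random variables `u₁, …, u_m` taking values a.s. in an interval of length `L`,
with partial sums `S_k = Σ_{i=1}^k u_i`, for all `λ₁, λ₂ > 0` with
`2·exp(-2λ₂²/(m·L²)) < 1`,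
`P(max_{k ≤ m} |S_k| > λ₁ + λ₂) ≤ 2·exp(-2λ₁²/(m·L²)) / (1 - 2·exp(-2λ₂²/(m·L²)))`. -/
theorem stmt7 {Θ : Type*} [MeasurableSpace Θ] (Pr : Measure Θ) [IsProbabilityMeasure Pr]
    (m : ℕ) (hm : 1 ≤ m) (u : ℕ → Θ → ℝ) (hmeas : ∀ i, Measurable (u i))
    (hInd : iIndepFun
      (fun k : {k : ℕ // 1 ≤ k ∧ k ≤ m} => u k.1) Pr)
    (hid : ∀ i ∈ Finset.Icc 1 m, ∀ j ∈ Finset.Icc 1 m, IdentDistrib (u i) (u j) Pr Pr)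
    (hmean : ∀ i ∈ Finset.Icc 1 m, (∫ θ, u i θ ∂Pr) = 0)
    (L : ℝ) (hL : 0 < L) (a : ℝ)
    (hbound : ∀ i ∈ Finset.Icc 1 m, ∀ᵐ θ ∂Pr, u i θ ∈ Set.Icc a (a + L))
    (S : ℕ → Θ → ℝ) (hS : ∀ k θ, S k θ = ∑ i ∈ Finset.Icc 1 k, u i θ) :
    ∀ l₁ l₂ : ℝ, 0 < l₁ → 0 < l₂ →
      2 * Real.exp (-2 * l₂ ^ 2 / (m * L ^ 2)) < 1 →
      Pr {θ | ∃ k ∈ Finset.Icc 1 m, l₁ + l₂ < |S k θ|}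
        ≤ ENNReal.ofReal (2 * Real.exp (-2 * l₁ ^ 2 / (m * L ^ 2))
            / (1 - 2 * Real.exp (-2 * l₂ ^ 2 / (m * L ^ 2)))) := by
  intro l₁ l₂ hl₁ hl₂ hB1
  classical
  set lam : ℝ := l₁ + l₂ with hlam_def
  have hlam_pos : 0 < lam := add_pos hl₁ hl₂
  set B : ℝ := 2 * Real.exp (-2 * l₂ ^ 2 / (m * L ^ 2)) with hB_def
  set A0 : ℝ := 2 * Real.exp (-2 * l₁ ^ 2 / (m * L ^ 2)) with hA0_def
  have hB_pos : 0 < B := by positivity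
  have h1B : 0 < 1 - B := by linarith
  have hSmeas : ∀ k, Measurable (S k) := by
    intro k
    have hSk : S k = fun θ => ∑ i ∈ Finset.Icc 1 k, u i θ := funext (hS k)
    rw [hSk]
    exact Finset.measurable_sum _ (fun i _ => hmeas i)
  -- sums over subtypes
  have hsum₁ : ∀ j, j ≤ m → ∀ θ,
      (∑ i ∈ (Finset.Icc 1 j).subtype (fun n => 1 ≤ n ∧ n ≤ m), u i.1 θ) = S j θ := by
    intro j hj θ
    rw [hS]
    exact Finset.sum_subtype_of_mem (p := fun n => 1 ≤ n ∧ n ≤ m) (fun i => u i θ)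
      (fun x hx => ⟨(Finset.mem_Icc.mp hx).1, le_trans (Finset.mem_Icc.mp hx).2 hj⟩)
  have hsum₂ : ∀ k θ,
      (∑ i ∈ (Finset.Icc (k+1) m).subtype (fun n => 1 ≤ n ∧ n ≤ m), u i.1 θ)
        = ∑ i ∈ Finset.Icc (k+1) m, u i θ := by
    intro k θ
    exact Finset.sum_subtype_of_mem (p := fun n => 1 ≤ n ∧ n ≤ m) (fun i => u i θ)
      (fun x hx => ⟨le_trans (Nat.succ_le_succ (Nat.zero_le k)) (Finset.mem_Icc.mp hx).1,
        (Finset.mem_Icc.mp hx).2⟩)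
  have hsplit : ∀ k, k ≤ m → ∀ θ, S m θ - S k θ = ∑ i ∈ Finset.Icc (k+1) m, u i θ := by
    intro k hk θ
    have h := Finset.sum_Ico_consecutive (fun i => u i θ)
      (Nat.succ_le_succ (Nat.zero_le k)) (Nat.succ_le_succ hk)
    simp only [Nat.succ_eq_add_one, zero_add] at h
    rw [Finset.Ico_add_one_right_eq_Icc, Finset.Ico_add_one_right_eq_Icc, Finset.Ico_add_one_right_eq_Icc] at h
    rw [hS, hS]
    linarith [h]
  have hS0 : ∀ θ, S 0 θ = 0 := by
    intro θ; rw [hS]; simp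
  -- Hoeffding for S m
  have hcard_all : ((Finset.Icc 1 m).subtype (fun n => 1 ≤ n ∧ n ≤ m)).card = m := by
    rw [Finset.card_subtype, Finset.filter_true_of_mem (fun x hx => Finset.mem_Icc.mp hx),
      Nat.card_Icc]
    omega
  have hA_bound : (Pr {θ | l₁ < |S m θ|}).toReal ≤ A0 := by
    have hne : ((Finset.Icc 1 m).subtype (fun n => 1 ≤ n ∧ n ≤ m)).Nonempty := by
      refine ⟨⟨1, le_refl 1, hm⟩, ?_⟩
      rw [Finset.mem_subtype]
      exact Finset.mem_Icc.mpr ⟨le_refl 1, hm⟩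
    have hb' : ∀ i ∈ (Finset.Icc 1 m).subtype (fun n => 1 ≤ n ∧ n ≤ m),
        ∀ᵐ θ ∂Pr, u i.1 θ ∈ Set.Icc a (a + L) :=
      fun i _ => hbound i.1 (Finset.mem_Icc.mpr i.2)
    have h0' : ∀ i ∈ (Finset.Icc 1 m).subtype (fun n => 1 ≤ n ∧ n ≤ m),
        (∫ θ, u i.1 θ ∂Pr) = 0 :=
      fun i _ => hmean i.1 (Finset.mem_Icc.mpr i.2)
    have H := hoeff_abs hInd (fun i => hmeas i.1) hL _ hne hb' h0' hl₁
    rw [hcard_all] at H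
    have hset : {θ | l₁ < |∑ i ∈ (Finset.Icc 1 m).subtype (fun n => 1 ≤ n ∧ n ≤ m), u i.1 θ|}
        = {θ | l₁ < |S m θ|} := by
      ext θ
      rw [Set.mem_setOf_eq, Set.mem_setOf_eq, hsum₁ m le_rfl θ]
    rw [hset] at H
    exact H
  -- Hoeffding for S m - S k
  -- Hoeffding for S m - S k
  have hB_bound : ∀ k, 1 ≤ k → k ≤ m → (Pr {θ | l₂ < |S m θ - S k θ|}).toReal ≤ B := by
    intro k h1k hkm
    rcases eq_or_lt_of_le hkm with rfl | hkm'
    · have hempty : {θ | l₂ < |S k θ - S k θ|} = (∅ : Set Θ) := by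
        ext θ
        simp only [Set.mem_setOf_eq, sub_self, abs_zero, Set.mem_empty_iff_false, iff_false,
          not_lt]
        exact hl₂.le
      rw [hempty, measure_empty, ENNReal.toReal_zero]
      positivity
    · have hcard₂ : ((Finset.Icc (k+1) m).subtype (fun n => 1 ≤ n ∧ n ≤ m)).card = m - k := by
        rw [Finset.card_subtype, Finset.filter_true_of_mem (fun x hx =>
          ⟨le_trans (Nat.succ_le_succ (Nat.zero_le k)) (Finset.mem_Icc.mp hx).1,
            (Finset.mem_Icc.mp hx).2⟩), Nat.card_Icc]
        omega
      have hne : ((Finset.Icc (k+1) m).subtype (fun n => 1 ≤ n ∧ n ≤ m)).Nonempty := by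
        refine ⟨⟨k+1, Nat.succ_le_succ (Nat.zero_le k), hkm'⟩, ?_⟩
        rw [Finset.mem_subtype]
        exact Finset.mem_Icc.mpr ⟨le_refl _, hkm'⟩
      have hb' : ∀ i ∈ (Finset.Icc (k+1) m).subtype (fun n => 1 ≤ n ∧ n ≤ m),
          ∀ᵐ θ ∂Pr, u i.1 θ ∈ Set.Icc a (a + L) :=
        fun i _ => hbound i.1 (Finset.mem_Icc.mpr i.2)
      have h0' : ∀ i ∈ (Finset.Icc (k+1) m).subtype (fun n => 1 ≤ n ∧ n ≤ m),
          (∫ θ, u i.1 θ ∂Pr) = 0 :=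
        fun i _ => hmean i.1 (Finset.mem_Icc.mpr i.2)
      have H := hoeff_abs hInd (fun i => hmeas i.1) hL _ hne hb' h0' hl₂
      rw [hcard₂] at H
      have hset : {θ | l₂ < |∑ i ∈ (Finset.Icc (k+1) m).subtype (fun n => 1 ≤ n ∧ n ≤ m), u i.1 θ|}
          = {θ | l₂ < |S m θ - S k θ|} := by
        ext θ
        rw [Set.mem_setOf_eq, Set.mem_setOf_eq, hsum₂ k θ, ← hsplit k hkm θ]
      rw [hset] at H
      refine H.trans ?_
      rw [hB_def]
      have hc1 : (1 : ℝ) ≤ ((m - k : ℕ) : ℝ) := by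
        have : 1 ≤ m - k := by omega
        exact_mod_cast this
      have hcm : ((m - k : ℕ) : ℝ) ≤ (m : ℝ) := by
        have : m - k ≤ m := by omega
        exact_mod_cast this
      have hexp : -2 * l₂ ^ 2 / (((m - k : ℕ) : ℝ) * L ^ 2) ≤ -2 * l₂ ^ 2 / ((m : ℝ) * L ^ 2) := by
        rw [div_le_div_iff₀ (by positivity) (by positivity)]
        have hmul := mul_le_mul_of_nonneg_left hcm
          (by positivity : (0:ℝ) ≤ 2 * l₂ ^ 2 * L ^ 2)
        nlinarith [hmul]
      have := Real.exp_le_exp.mpr hexp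
      linarith
  -- events
  set A : ℕ → Set Θ := fun k => {θ | lam < |S k θ| ∧ ∀ j < k, |S j θ| ≤ lam} with hA_def
  set C : ℕ → Set Θ := fun k => {θ | |S m θ - S k θ| ≤ l₂} with hC_def
  have hA_meas : ∀ k, MeasurableSet (A k) := by
    intro k
    have : A k = {θ | lam < |S k θ|} ∩ ⋂ j ∈ Set.Iio k, {θ | |S j θ| ≤ lam} := by
      ext θ
      simp only [hA_def, Set.mem_setOf_eq, Set.mem_inter_iff, Set.mem_iInter, Set.mem_Iio]
    rw [this]
    exact (measurableSet_lt measurable_const (hSmeas k).abs).inter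
      (MeasurableSet.biInter (Set.to_countable _)
        (fun j _ => measurableSet_le (hSmeas j).abs measurable_const))
  have hC_meas : ∀ k, MeasurableSet (C k) :=
    fun k => measurableSet_le ((hSmeas m).sub (hSmeas k)).abs measurable_const
  have hAdisj : ∀ i j, i ≠ j → Disjoint (A i) (A j) := by
    have key : ∀ i j, i < j → Disjoint (A i) (A j) := by
      intro i j hij
      rw [Set.disjoint_left]
      intro θ h1 h2
      exact absurd h1.1 (not_lt.mpr (h2.2 i hij))
    intro i j hij
    rcases hij.lt_or_gt with h | h
    · exact key _ _ h
    · exact (key _ _ h).symm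
  have hE_eq : {θ | ∃ k ∈ Finset.Icc 1 m, lam < |S k θ|} = ⋃ k ∈ Finset.Icc 1 m, A k := by
    ext θ
    simp only [Set.mem_setOf_eq, Set.mem_iUnion, exists_prop]
    constructor
    · rintro ⟨k₀, hk₀, hgt⟩
      have hex : ∃ n, lam < |S n θ| := ⟨k₀, hgt⟩
      refine ⟨Nat.find hex, ?_, Nat.find_spec hex, fun j hj => not_lt.mp (Nat.find_min hex hj)⟩
      rw [Finset.mem_Icc]
      constructor
      · by_contra h
        push_neg at h
        have h0 : Nat.find hex = 0 := by omega
        have := Nat.find_spec hex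
        rw [h0, hS0 θ, abs_zero] at this
        linarith
      · exact le_trans (Nat.find_min' hex hgt) (Finset.mem_Icc.mp hk₀).2
    · rintro ⟨k, hk, h1, _⟩
      exact ⟨k, hk, h1⟩
  -- independence
  have hkey : ∀ k, 1 ≤ k → k ≤ m → Pr (A k ∩ C k) = Pr (A k) * Pr (C k) := by
    intro k h1k hkm
    set T₁ : Finset {n : ℕ // 1 ≤ n ∧ n ≤ m} :=
      (Finset.Icc 1 k).subtype (fun n => 1 ≤ n ∧ n ≤ m) with hT₁_def
    set T₂ : Finset {n : ℕ // 1 ≤ n ∧ n ≤ m} :=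
      (Finset.Icc (k+1) m).subtype (fun n => 1 ≤ n ∧ n ≤ m) with hT₂_def
    have hdisj : Disjoint T₁ T₂ := by
      rw [Finset.disjoint_left]
      intro i h1 h2
      rw [hT₁_def, Finset.mem_subtype, Finset.mem_Icc] at h1
      rw [hT₂_def, Finset.mem_subtype, Finset.mem_Icc] at h2
      omega
    have hIndep := hInd.indepFun_finset T₁ T₂ hdisj (fun i => hmeas i.1)
    -- coordinate sum functions
    set F : ℕ → (↥T₁ → ℝ) → ℝ := fun j v =>
      ∑ i ∈ Finset.univ.filter (fun i : ↥T₁ => (i : {n : ℕ // 1 ≤ n ∧ n ≤ m}).1 ≤ j), v i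
      with hF_def
    set G : (↥T₂ → ℝ) → ℝ := fun v => ∑ i, v i with hG_def
    have hFmeas : ∀ j, Measurable (F j) :=
      fun j => Finset.measurable_sum _ (fun i _ => measurable_pi_apply i)
    have hGmeas : Measurable G :=
      Finset.measurable_sum _ (fun i _ => measurable_pi_apply i)
    have hFeq : ∀ j, j ≤ k → ∀ θ,
        F j (fun i : ↥T₁ => u (i : {n : ℕ // 1 ≤ n ∧ n ≤ m}).1 θ) = S j θ := by
      intro j hj θ
      rw [hF_def]
      simp only
      rw [Finset.sum_filter]
      rw [Finset.sum_coe_sort T₁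
        (fun i : {n : ℕ // 1 ≤ n ∧ n ≤ m} => if i.1 ≤ j then u i.1 θ else 0)]
      rw [← Finset.sum_filter]
      have hfe : T₁.filter (fun i : {n : ℕ // 1 ≤ n ∧ n ≤ m} => i.1 ≤ j)
          = (Finset.Icc 1 j).subtype (fun n => 1 ≤ n ∧ n ≤ m) := by
        ext i
        rw [Finset.mem_filter, hT₁_def, Finset.mem_subtype, Finset.mem_subtype,
          Finset.mem_Icc, Finset.mem_Icc]
        have := i.2.1
        constructor
        · rintro ⟨⟨_, _⟩, h⟩; exact ⟨this, h⟩
        · rintro ⟨_, h⟩; exact ⟨⟨this, le_trans h hj⟩, h⟩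
      rw [hfe]
      exact hsum₁ j (le_trans hj hkm) θ
    have hGeq : ∀ θ, G (fun i : ↥T₂ => u (i : {n : ℕ // 1 ≤ n ∧ n ≤ m}).1 θ) = S m θ - S k θ := by
      intro θ
      rw [hG_def]
      simp only
      rw [Finset.sum_coe_sort T₂ (fun i : {n : ℕ // 1 ≤ n ∧ n ≤ m} => u i.1 θ)]
      rw [hsplit k hkm θ, ← hsum₂ k θ]
    -- events as preimages
    set EA : Set (↥T₁ → ℝ) := {v | lam < |F k v| ∧ ∀ j < k, |F j v| ≤ lam} with hEA_def
    set EC : Set (↥T₂ → ℝ) := {v | |G v| ≤ l₂} with hEC_def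
    have hEAm : MeasurableSet EA := by
      have : EA = {v | lam < |F k v|} ∩ ⋂ j ∈ Set.Iio k, {v | |F j v| ≤ lam} := by
        ext v
        simp only [hEA_def, Set.mem_setOf_eq, Set.mem_inter_iff, Set.mem_iInter, Set.mem_Iio]
      rw [this]
      exact (measurableSet_lt measurable_const (hFmeas k).abs).inter
        (MeasurableSet.biInter (Set.to_countable _)
          (fun j _ => measurableSet_le (hFmeas j).abs measurable_const))
    have hECm : MeasurableSet EC := measurableSet_le hGmeas.abs measurable_const
    have hA_pre : A k = (fun θ (i : ↥T₁) => u (i : {n : ℕ // 1 ≤ n ∧ n ≤ m}).1 θ) ⁻¹' EA := by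
      ext θ
      simp only [hA_def, Set.mem_setOf_eq, Set.mem_preimage, hEA_def]
      constructor
      · rintro ⟨h1, h2⟩
        refine ⟨by rw [hFeq k le_rfl θ]; exact h1, fun j hj => ?_⟩
        rw [hFeq j hj.le θ]
        exact h2 j hj
      · rintro ⟨h1, h2⟩
        refine ⟨by rw [← hFeq k le_rfl θ]; exact h1, fun j hj => ?_⟩
        rw [← hFeq j hj.le θ]
        exact h2 j hj
    have hC_pre : C k = (fun θ (i : ↥T₂) => u (i : {n : ℕ // 1 ≤ n ∧ n ≤ m}).1 θ) ⁻¹' EC := by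
      ext θ
      simp only [hC_def, Set.mem_setOf_eq, Set.mem_preimage, hEC_def]
      rw [hGeq θ]
    rw [hA_pre, hC_pre]
    exact hIndep.measure_inter_preimage_eq_mul EA EC hEAm hECm
  -- lower bound on Pr (C k)
  have hC_lb : ∀ k, 1 ≤ k → k ≤ m → 1 - B ≤ (Pr (C k)).toReal := by
    intro k h1k hkm
    have hcompl : (C k)ᶜ = {θ | l₂ < |S m θ - S k θ|} := by
      ext θ; simp only [hC_def, Set.mem_compl_iff, Set.mem_setOf_eq, not_le]
    have hadd : Pr (C k) + Pr ((C k)ᶜ) = 1 := by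
      rw [measure_add_measure_compl (hC_meas k), measure_univ]
    have hadd' : (Pr (C k)).toReal + (Pr ((C k)ᶜ)).toReal = 1 := by
      rw [← ENNReal.toReal_add (measure_ne_top _ _) (measure_ne_top _ _), hadd, ENNReal.toReal_one]
    have hcb : (Pr ((C k)ᶜ)).toReal ≤ B := by
      rw [hcompl]; exact hB_bound k h1k hkm
    linarith
  -- assembly
  have hsum_split : (Pr (⋃ k ∈ Finset.Icc 1 m, A k)).toReal
      = ∑ k ∈ Finset.Icc 1 m, (Pr (A k)).toReal := by
    rw [measure_biUnion_finset (fun i _ j _ hij => hAdisj i j hij) (fun k _ => hA_meas k)]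
    exact ENNReal.toReal_sum (fun k _ => measure_ne_top _ _)
  have hsub2 : (⋃ k ∈ Finset.Icc 1 m, (A k ∩ C k)) ⊆ {θ | l₁ < |S m θ|} := by
    intro θ hθ
    simp only [Set.mem_iUnion, exists_prop] at hθ
    obtain ⟨k, hk, hAk, hCk⟩ := hθ
    simp only [hA_def, Set.mem_setOf_eq] at hAk
    simp only [hC_def, Set.mem_setOf_eq] at hCk
    simp only [Set.mem_setOf_eq]
    have h1 := abs_sub_abs_le_abs_sub (S k θ) (S m θ)
    rw [abs_sub_comm] at h1
    have := hAk.1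
    simp only [hlam_def] at this
    linarith
  have hsum_split2 : ∑ k ∈ Finset.Icc 1 m, (Pr (A k ∩ C k)).toReal
      ≤ (Pr {θ | l₁ < |S m θ|}).toReal := by
    rw [← ENNReal.toReal_sum (fun k _ => measure_ne_top _ _)]
    refine ENNReal.toReal_mono (measure_ne_top _ _) ?_
    have hdisj2 : (↑(Finset.Icc 1 m) : Set ℕ).PairwiseDisjoint (fun k => A k ∩ C k) :=
      fun i _ j _ hij =>
        (hAdisj i j hij).mono Set.inter_subset_left Set.inter_subset_left
    rw [← measure_biUnion_finset hdisj2 (fun k _ => (hA_meas k).inter (hC_meas k))]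
    exact measure_mono hsub2
  have main_real : (Pr {θ | ∃ k ∈ Finset.Icc 1 m, lam < |S k θ|}).toReal * (1 - B) ≤ A0 := by
    rw [hE_eq, hsum_split]
    calc (∑ k ∈ Finset.Icc 1 m, (Pr (A k)).toReal) * (1 - B)
        = ∑ k ∈ Finset.Icc 1 m, (Pr (A k)).toReal * (1 - B) := Finset.sum_mul _ _ _
      _ ≤ ∑ k ∈ Finset.Icc 1 m, (Pr (A k ∩ C k)).toReal := by
          refine Finset.sum_le_sum (fun k hk => ?_)
          obtain ⟨h1k, hkm⟩ := Finset.mem_Icc.mp hk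
          calc (Pr (A k)).toReal * (1 - B)
              ≤ (Pr (A k)).toReal * (Pr (C k)).toReal :=
                mul_le_mul_of_nonneg_left (hC_lb k h1k hkm) ENNReal.toReal_nonneg
            _ = (Pr (A k ∩ C k)).toReal := by
                rw [hkey k h1k hkm, ENNReal.toReal_mul]
      _ ≤ (Pr {θ | l₁ < |S m θ|}).toReal := hsum_split2
      _ ≤ A0 := hA_bound
  have hfinal : (Pr {θ | ∃ k ∈ Finset.Icc 1 m, lam < |S k θ|}).toReal ≤ A0 / (1 - B) :=
    (le_div_iff₀ h1B).mpr main_real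
  calc Pr {θ | ∃ k ∈ Finset.Icc 1 m, lam < |S k θ|}
      = ENNReal.ofReal ((Pr {θ | ∃ k ∈ Finset.Icc 1 m, lam < |S k θ|}).toReal) :=
        (ENNReal.ofReal_toReal (measure_ne_top _ _)).symm
    _ ≤ ENNReal.ofReal (A0 / (1 - B)) := ENNReal.ofReal_le_ofReal hfinal
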